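/- Let n ≥ 2 and let a = (a_1,…,a_n) be a tuple of integers with each a_i ≥ 2. Set λ := exp(2πi/μ(a)) and define λ_1 := λ and λ_{k+1} := λ·λ_k^{−a_k} for 1 ≤ k ≤ n−1. Then λ_n^{a_n} = λ, and for all t, s ∈ ℂ and all (z_1,…,z_n) ∈ ℂ^n one has g_a^{t, e^{iθ}s}(λ_1 z_1, λ_2 z_2, …, λ_n z_n) = exp(2πi/μ(a)) · g_a^{t,s}(z_1,…,z_n), where θ := 2π a_1/μ(a). -/

import Mathlib

open scoped BigOperators

/-- The signed chain polynomial
`p_a(z_1,…,z_n) = −z_1^{a_1}z_2 + z_2^{a_2}z_3 − ⋯ + (−1)^n z_n^{a_n}`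
(indices `0`-based: `z i`, `a i` for `i = 0, …, n−1`). -/
noncomputable def chainP (n : ℕ) (a : ℕ → ℕ) (z : ℕ → ℂ) : ℂ :=
  (∑ k ∈ Finset.range (n - 1), (-1 : ℂ) ^ (k + 1) * z k ^ a k * z (k + 1))
    + (-1 : ℂ) ^ n * z (n - 1) ^ a (n - 1)

/-- The Milnor number `μ(a) = Σ_{k=0}^{n} (−1)^k a_{k+1}⋯a_n` (0-based: the product is
over indices `k ≤ i < n`). -/
def muZ (n : ℕ) (a : ℕ → ℕ) : ℤ :=
  ∑ k ∈ Finset.range (n + 1), (-1 : ℤ) ^ k * ∏ i ∈ Finset.Ico k n, (a i : ℤ)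

/-- `g_a^{t,s}(z) = z_1 − s z_2 − t z_1^{a_1} z_2 − p_{−a}(z_2,…,z_n)` (0-based). -/
noncomputable def gMap (n : ℕ) (a : ℕ → ℕ) (t s : ℂ) (z : ℕ → ℂ) : ℂ :=
  z 0 - s * z 1 - t * z 0 ^ a 0 * z 1
    - chainP (n - 1) (fun i => a (i + 1)) (fun i => z (i + 1))

theorem stmt_6 (n : ℕ) (hn : 2 ≤ n) (a : ℕ → ℕ) (ha : ∀ i < n, 2 ≤ a i)
    (lam : ℕ → ℂ)
    (hlam0 : lam 0 = Complex.exp (2 * (Real.pi : ℂ) * Complex.I / (muZ n a : ℂ)))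
    (hlamrec : ∀ k : ℕ, k + 1 < n →
      lam (k + 1)
        = Complex.exp (2 * (Real.pi : ℂ) * Complex.I / (muZ n a : ℂ))
            * lam k ^ (-(a k : ℤ))) :
    lam (n - 1) ^ a (n - 1)
        = Complex.exp (2 * (Real.pi : ℂ) * Complex.I / (muZ n a : ℂ)) ∧
    ∀ t s : ℂ, ∀ z : ℕ → ℂ,
      gMap n a t
          (Complex.exp (((2 * Real.pi * (a 0 : ℝ) / (muZ n a : ℝ) : ℝ) : ℂ) * Complex.I) * s)
          (fun i => lam i * z i)
        = Complex.exp (2 * (Real.pi : ℂ) * Complex.I / (muZ n a : ℂ))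
            * gMap n a t s z := by
  set w : ℂ := 2 * (Real.pi : ℂ) * Complex.I / (muZ n a : ℂ) with hw
  -- recurrence for the Milnor number
  have hmu_rec : ∀ m : ℕ, muZ (m + 1) a = (a m : ℤ) * muZ m a + (-1) ^ (m + 1) := by
    intro m
    unfold muZ
    rw [Finset.sum_range_succ, Finset.Ico_self, Finset.prod_empty, mul_one]
    congr 1
    rw [Finset.mul_sum]
    refine Finset.sum_congr rfl fun k hk => ?_
    have hk' : k ≤ m := by have := Finset.mem_range.mp hk; omega
    rw [Finset.prod_Ico_succ_top hk' (fun i => (a i : ℤ))]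
    push_cast
    ring
  have hsq : ∀ m : ℕ, ((-1 : ℤ)) ^ m * (-1) ^ m = 1 := by
    intro m
    rw [← pow_add, ← two_mul, pow_mul]
    norm_num
  -- closed form for lam
  have hlam : ∀ k, k < n →
      lam k = Complex.exp ((((-1 : ℤ) ^ k * muZ k a : ℤ) : ℂ) * w) := by
    intro k
    induction k with
    | zero =>
      intro _
      rw [hlam0]
      norm_num [muZ]
    | succ k ih =>
      intro hk1
      have hk : k < n := by omega
      rw [hlamrec k hk1, ih hk, ← Complex.exp_int_mul, ← Complex.exp_add]
      congr 1
      have h1 : ((-1 : ℤ)) ^ (k + 1) * muZ (k + 1) a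
          = 1 - (a k : ℤ) * ((-1) ^ k * muZ k a) := by
        rw [hmu_rec k]
        linear_combination hsq (k + 1)
      have h1' := congrArg (fun x : ℤ => (x : ℂ)) h1
      push_cast at h1' ⊢
      linear_combination w * h1'.symm
  have hne : ∀ k, k < n → lam k ≠ 0 := by
    intro k hk
    rw [hlam k hk]
    exact Complex.exp_ne_zero _
  -- exp of multiples of μ·w is 1
  have hE : Complex.exp ((muZ n a : ℂ) * w) = 1 := by
    rcases eq_or_ne ((muZ n a : ℂ)) 0 with h | h
    · rw [h, zero_mul, Complex.exp_zero]
    · have : (muZ n a : ℂ) * w = 2 * (Real.pi : ℂ) * Complex.I := by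
        rw [hw]; field_simp
      rw [this, Complex.exp_two_pi_mul_I]
  have hEc : ∀ c : ℤ, Complex.exp (((c * muZ n a : ℤ) : ℂ) * w) = 1 := by
    intro c
    have : (((c * muZ n a : ℤ) : ℂ) * w) = (c : ℂ) * ((muZ n a : ℂ) * w) := by
      push_cast; ring
    rw [this, Complex.exp_int_mul, hE, one_zpow]
  -- part 1
  have keyLast : lam (n - 1) ^ a (n - 1) = Complex.exp w := by
    have hm : n - 1 + 1 = n := by omega
    have hlt : n - 1 < n := by omega
    rw [hlam (n - 1) hlt, ← Complex.exp_nat_mul]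
    have h2 : (a (n - 1) : ℤ) * ((-1) ^ (n - 1) * muZ (n - 1) a)
        = (-1) ^ (n - 1) * muZ n a + 1 := by
      have h2' : ∀ m : ℕ, (a m : ℤ) * ((-1) ^ m * muZ m a)
          = (-1) ^ m * muZ (m + 1) a + 1 := by
        intro m
        rw [hmu_rec m]
        linear_combination hsq m
      have := h2' (n - 1)
      rwa [hm] at this
    have h2' := congrArg (fun x : ℤ => (x : ℂ)) h2
    push_cast at h2'
    have harg : (a (n - 1) : ℂ) * ((((-1 : ℤ) ^ (n - 1) * muZ (n - 1) a : ℤ) : ℂ) * w)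
        = ((((-1 : ℤ) ^ (n - 1) * muZ n a : ℤ) : ℂ) * w) + w := by
      push_cast
      linear_combination w * h2'
    rw [harg, Complex.exp_add, hEc ((-1) ^ (n - 1)), one_mul]
  -- scaling lemma
  have hS : ∀ k, k + 1 < n → lam k ^ a k * lam (k + 1) = Complex.exp w := by
    intro k hk
    have h0 : lam k ≠ 0 := hne k (by omega)
    rw [hlamrec k hk, zpow_neg, zpow_natCast]
    field_simp
  refine ⟨keyLast, ?_⟩
  intro t s z
  have hidx : n - 1 - 1 + 1 = n - 1 := by omega
  have keyS : Complex.exp (((2 * Real.pi * (a 0 : ℝ) / (muZ n a : ℝ) : ℝ) : ℂ) * Complex.I)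
      * lam 1 = Complex.exp w := by
    have harg : (((2 * Real.pi * (a 0 : ℝ) / (muZ n a : ℝ) : ℝ) : ℂ) * Complex.I)
        = (a 0 : ℂ) * w := by
      rw [hw]; push_cast; ring
    rw [harg, Complex.exp_nat_mul]
    conv_lhs => rw [← hlam0]
    exact hS 0 (by omega)
  have keyT : lam 0 ^ a 0 * lam 1 = Complex.exp w := hS 0 (by omega)
  have key1 : lam 0 = Complex.exp w := hlam0
  simp only [gMap, chainP]
  rw [hidx]
  have hsum : (∑ k ∈ Finset.range (n - 1 - 1),
        (-1 : ℂ) ^ (k + 1) * (lam (k + 1) * z (k + 1)) ^ a (k + 1)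
          * (lam (k + 1 + 1) * z (k + 1 + 1)))
      = Complex.exp w * ∑ k ∈ Finset.range (n - 1 - 1),
        (-1 : ℂ) ^ (k + 1) * z (k + 1) ^ a (k + 1) * z (k + 1 + 1) := by
    rw [Finset.mul_sum]
    refine Finset.sum_congr rfl fun k hk => ?_
    have hk2 : k + 1 + 1 < n := by
      have := Finset.mem_range.mp hk; omega
    have h := hS (k + 1) hk2
    rw [mul_pow]
    linear_combination ((-1 : ℂ) ^ (k + 1) * z (k + 1) ^ a (k + 1) * z (k + 1 + 1)) * h
  rw [hsum, mul_pow, mul_pow]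
  linear_combination z 0 * key1 - s * z 1 * keyS - t * z 0 ^ a 0 * z 1 * keyT
    - (-1 : ℂ) ^ (n - 1) * z (n - 1) ^ a (n - 1) * keyLast
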